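/- Search transitions are bilinearly bounded: let a machine run consist of transitions each of which either strictly decreases a natural-number measure μ on states (search transitions) or increases μ by at most a fixed bound B (principal transitions), where B ≥ μ of the initial state. Then the number of search transitions in the run is at most B · (p + 1), where p is the number of principal transitions. -/
import Mathlib

/-- Search transitions are bilinearly bounded: in a run `Q₀, …, Qₙ` where each
step is either a search step (strictly decreasing the measure `μ`) or a
principal step (increasing `μ` by at most `B`), with `μ Q₀ ≤ B`, the number of
search steps is at most `B * (p + 1)` where `p` is the number of principal steps. -/
theorem search_bilinear {St : Type*} (Q : ℕ → St) (μ : St → ℕ) (lab : ℕ → Bool)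
    (n B : ℕ) (h0 : μ (Q 0) ≤ B)
    (hprin : ∀ i < n, lab i = true → μ (Q (i + 1)) ≤ μ (Q i) + B)
    (hsea : ∀ i < n, lab i = false → μ (Q (i + 1)) < μ (Q i)) :
    ((Finset.range n).filter (fun i => lab i = false)).card ≤
      B * (((Finset.range n).filter (fun i => lab i = true)).card + 1) := by
  suffices h : μ (Q n) + ((Finset.range n).filter (fun i => lab i = false)).card ≤
      B * (((Finset.range n).filter (fun i => lab i = true)).card + 1) by omega
  induction n with
  | zero => simpa using h0
  | succ m ih =>
    have ih' := ih (fun i hi => hprin i (by omega)) (fun i hi => hsea i (by omega))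
    rw [Finset.range_add_one, Finset.filter_insert, Finset.filter_insert]
    cases hm : lab m with
    | false =>
      have := hsea m (by omega) hm
      rw [if_pos rfl, if_neg (by simp), Finset.card_insert_of_notMem (by simp)]
      omega
    | true =>
      have := hprin m (by omega) hm
      rw [if_neg (by simp), if_pos rfl, Finset.card_insert_of_notMem (by simp)]
      rw [Nat.mul_succ]
      omega
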